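/- The median set 𝔐_μ is contained in the closure of the convex hull of the support of μ (the smallest closed convex subset containing supp μ). -/

import Mathlib

open MeasureTheory Metric

/-- Euclidean case of Proposition 2.7, location of the median.
The set of minimizers of `f` over `B̄(a,ρ)` is contained in the closure of the convex
hull of the support of `μ` (the smallest closed convex set containing `supp μ`). -/
theorem stmt4 {n : ℕ} (hn : 1 ≤ n) (a : EuclideanSpace ℝ (Fin n)) (ρ : ℝ) (hρ : 0 < ρ)
    (μ : Measure (EuclideanSpace ℝ (Fin n))) [IsProbabilityMeasure μ]
    (hsupp : {x : EuclideanSpace ℝ (Fin n) | ∀ U ∈ nhds x, 0 < μ U} ⊆ ball a ρ)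
    (f : EuclideanSpace ℝ (Fin n) → ℝ)
    (hf : ∀ x, f x = ∫ p, ‖x - p‖ ∂μ) :
    {x ∈ closedBall a ρ | IsMinOn f (closedBall a ρ) x} ⊆
      closure (convexHull ℝ {x : EuclideanSpace ℝ (Fin n) | ∀ U ∈ nhds x, 0 < μ U}) := by
  classical
  set S : Set (EuclideanSpace ℝ (Fin n)) := {x | ∀ U ∈ nhds x, 0 < μ U} with hSdef
  set K := closure (convexHull ℝ S) with hKdef
  -- the complement of the support is null
  have hScompl : μ Sᶜ = 0 := by
    obtain ⟨T, hTc, hTsub, hTU⟩ := TopologicalSpace.isOpen_sUnion_countable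
      {U : Set (EuclideanSpace ℝ (Fin n)) | IsOpen U ∧ μ U = 0} (fun U hU => hU.1)
    have h1 : Sᶜ ⊆ ⋃₀ {U : Set (EuclideanSpace ℝ (Fin n)) | IsOpen U ∧ μ U = 0} := by
      intro x hx
      simp only [Set.mem_compl_iff, hSdef, Set.mem_setOf_eq, not_forall] at hx
      obtain ⟨U, hU, hUpos⟩ := hx
      refine ⟨interior U, ⟨isOpen_interior, ?_⟩, mem_interior_iff_mem_nhds.2 hU⟩
      have : μ U = 0 := by simpa using hUpos
      exact measure_mono_null interior_subset this
    have h2 : μ (⋃₀ T) = 0 :=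
      (measure_sUnion_null_iff hTc).2 fun U hU => (hTsub hU).2
    exact measure_mono_null h1 (by rw [← hTU]; exact h2)
  have hae : ∀ᵐ p ∂μ, p ∈ S := by
    rw [ae_iff]; exact hScompl
  have hSne : S.Nonempty := by
    by_contra h
    rw [Set.not_nonempty_iff_eq_empty] at h
    have : μ Set.univ = 0 := by
      have := hScompl; rw [h] at this; simpa using this
    simp [measure_univ] at this
  have hKconv : Convex ℝ K := (convex_convexHull ℝ S).closure
  have hKne : K.Nonempty := hSne.mono ((subset_convexHull ℝ S).trans subset_closure)
  have hKball : K ⊆ closedBall a ρ :=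
    closure_minimal (convexHull_min (hsupp.trans ball_subset_closedBall)
      (convex_closedBall a ρ)) isClosed_closedBall
  intro x hx
  obtain ⟨hxball, hxmin⟩ := hx
  by_contra hxK
  -- project x onto K
  obtain ⟨y, hyK, hynorm⟩ := exists_norm_eq_iInf_of_complete_convex hKne
    (isClosed_closure.isComplete) hKconv x
  have hproj : ∀ p ∈ K, inner ℝ (x - y) (p - y) ≤ (0 : ℝ) :=
    (norm_eq_iInf_iff_real_inner_le_zero hKconv hyK).1 hynorm
  have hxy : x ≠ y := fun h => hxK (h ▸ hyK)
  have hxy0 : (0:ℝ) < ‖x - y‖ := by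
    rw [norm_pos_iff, sub_ne_zero]; exact hxy
  -- pointwise strict inequality on S
  have hkey : ∀ p ∈ S, ‖y - p‖ < ‖x - p‖ := by
    intro p hp
    have hpK : p ∈ K := subset_closure (subset_convexHull ℝ S hp)
    have h1 : inner ℝ (x - y) (p - y) ≤ (0 : ℝ) := hproj p hpK
    have hsq : ‖x - p‖ ^ 2 = ‖x - y‖ ^ 2 + 2 * inner ℝ (x - y) (y - p) + ‖y - p‖ ^ 2 := by
      have : x - p = (x - y) + (y - p) := by abel
      rw [this, norm_add_sq_real]
    have h2 : (0:ℝ) ≤ inner ℝ (x - y) (y - p) := by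
      have : inner ℝ (x - y) (y - p) = -(inner ℝ (x - y) (p - y) : ℝ) := by
        rw [← inner_neg_right]; congr 1; abel
      rw [this]; linarith
    have h3 : ‖y - p‖ ^ 2 < ‖x - p‖ ^ 2 := by
      rw [hsq]; nlinarith
    exact lt_of_pow_lt_pow_left₀ 2 (norm_nonneg _) h3
  -- integrability
  have hcont : ∀ z : EuclideanSpace ℝ (Fin n),
      Continuous (fun p : EuclideanSpace ℝ (Fin n) => ‖z - p‖) :=
    fun z => (continuous_const.sub continuous_id).norm
  have hint : ∀ z : EuclideanSpace ℝ (Fin n),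
      Integrable (fun p => ‖z - p‖) μ := by
    intro z
    refine Integrable.mono' (integrable_const (‖z - a‖ + ρ)) ((hcont z).aestronglyMeasurable) ?_
    filter_upwards [hae] with p hp
    have hpball : p ∈ ball a ρ := hsupp hp
    have : ‖z - p‖ ≤ ‖z - a‖ + ‖a - p‖ := norm_sub_le_norm_sub_add_norm_sub z a p
    have hap : ‖a - p‖ < ρ := by
      rw [← dist_eq_norm]; exact (mem_ball'.1 hpball)
    rw [Real.norm_of_nonneg (norm_nonneg _)]
    linarith
  -- strict integral inequality
  have hd : Integrable (fun p => ‖x - p‖ - ‖y - p‖) μ := (hint x).sub (hint y)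
  have hdnn : 0 ≤ᵐ[μ] fun p => ‖x - p‖ - ‖y - p‖ := by
    filter_upwards [hae] with p hp
    have := hkey p hp; dsimp; linarith
  have hdsupp : 0 < μ (Function.support fun p => ‖x - p‖ - ‖y - p‖) := by
    have hSsub : S ⊆ Function.support fun p => ‖x - p‖ - ‖y - p‖ := by
      intro p hp
      have := hkey p hp
      simp only [Function.mem_support]
      intro h; linarith [sub_eq_zero.1 h]
    have hSpos : 0 < μ S := by
      rw [pos_iff_ne_zero]
      intro h
      have : μ (S ∪ Sᶜ) = 0 := measure_union_null h hScompl
      rw [Set.union_compl_self] at this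
      simp [measure_univ] at this
    exact lt_of_lt_of_le hSpos (measure_mono hSsub)
  have hpos : 0 < ∫ p, (‖x - p‖ - ‖y - p‖) ∂μ :=
    (integral_pos_iff_support_of_nonneg_ae hdnn hd).2 hdsupp
  rw [integral_sub (hint x) (hint y)] at hpos
  have hfyfx : f y < f x := by
    rw [hf x, hf y]; linarith
  have hyball : y ∈ closedBall a ρ := hKball hyK
  have : f x ≤ f y := (isMinOn_iff.1 hxmin) y hyball
  linarith
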